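/- Let K ⊆ L be totally real number fields, U an L-vector space, B : U × U → L a symmetric positive definite L-bilinear form (positive definite meaning B(v,v) ≠ 0 and totally positive in L for all nonzero v, or equivalently positive under each real embedding), and let v_1, …, v_n ∈ U be vectors such that B(v_i, v_j) ∈ K for all 1 ≤ i, j ≤ n. Then the dimension over K of the K-span of {v_1, …, v_n} equals the dimension over L of the L-span of {v_1, …, v_n}. -/

import Mathlib

def TotallyPositive (F : Type*) [Field F] (x : F) : Prop :=
  ∀ φ : F →+* ℝ, 0 < φ x

def IsTotallyRealField (F : Type*) [Field F] : Prop :=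
  ∀ φ : F →+* ℂ, ∀ x : F, (φ x).im = 0

theorem span_dim_eq_of_gram_in_subfield
    (L : Type*) [Field L] [NumberField L] (hL : IsTotallyRealField L)
    (K : Subfield L) (hK : IsTotallyRealField ↥K)
    (U : Type*) [AddCommGroup U] [Module L U]
    (B : U →ₗ[L] U →ₗ[L] L)
    (hsymm : ∀ u v : U, B u v = B v u)
    (hpos : ∀ v : U, v ≠ 0 → TotallyPositive L (B v v))
    (n : ℕ) (v : Fin n → U)
    (hmem : ∀ i j : Fin n, B (v i) (v j) ∈ K) :
    Module.finrank ↥K ↥(Submodule.span ↥K (Set.range v)) =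
      Module.finrank L ↥(Submodule.span L (Set.range v)) := by
  classical
  -- a real embedding of L
  obtain ⟨ψ⟩ : Nonempty (L →+* ℂ) := inferInstance
  have hre : NumberField.ComplexEmbedding.IsReal ψ := by
    rw [NumberField.ComplexEmbedding.isReal_iff]
    ext x
    simpa [NumberField.ComplexEmbedding.conjugate, Complex.conj_eq_iff_im] using hL ψ x
  set σ : L →+* ℝ := hre.embedding with hσ
  -- B is anisotropic
  have hne : ∀ w : U, B w w = 0 → w = 0 := by
    intro w hw
    by_contra h
    have := hpos w h σ
    rw [hw, map_zero] at this
    exact lt_irrefl _ this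
  -- choose a basis of the L-span among the v i
  obtain ⟨b, hbsub, hbspan, hbindep⟩ := exists_linearIndependent L (Set.range v)
  have hfin : b.Finite := (Set.finite_range v).subset hbsub
  haveI := hfin.fintype
  have hmemb : ∀ x y : b, B (x : U) (y : U) ∈ K := by
    rintro ⟨x, hx⟩ ⟨y, hy⟩
    obtain ⟨i, rfl⟩ := hbsub hx
    obtain ⟨j, rfl⟩ := hbsub hy
    exact hmem i j
  set Gk : Matrix b b K := fun x y => ⟨B (x : U) (y : U), hmemb x y⟩ with hGk
  set G : Matrix b b L := Gk.map K.subtype with hGdef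
  have hGapp : ∀ x y : b, G x y = B (x : U) (y : U) := fun x y => rfl
  -- det G ≠ 0
  have hdetG : G.det ≠ 0 := by
    intro h0
    obtain ⟨c, hc, hc0⟩ := Matrix.exists_mulVec_eq_zero_iff.2 h0
    have hBw : ∀ x : b, B (x : U) (∑ y : b, c y • (y : U)) = 0 := by
      intro x
      have h1 := congrFun hc0 x
      simp only [Matrix.mulVec, dotProduct, Pi.zero_apply, hGdef,
        Matrix.map_apply] at h1
      rw [map_sum]
      simp only [map_smul, smul_eq_mul]
      rw [← h1]
      exact Finset.sum_congr rfl fun y _ => mul_comm _ _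
    have hww : B (∑ x : b, c x • (x : U)) (∑ x : b, c x • (x : U)) = 0 := by
      rw [map_sum]
      refine Finset.sum_eq_zero fun x _ => ?_
      rw [map_smul, smul_eq_mul, hsymm, hBw x, mul_zero]
    have hw0 : (∑ x : b, c x • (x : U)) = 0 := hne _ hww
    have hc0' : ∀ x : b, c x = 0 := Fintype.linearIndependent_iff.1 hbindep c hw0
    exact hc (funext hc0')
  have hdetGk : Gk.det ≠ 0 := by
    intro h0
    apply hdetG
    rw [hGdef, ← RingHom.mapMatrix_apply, ← RingHom.map_det, h0, map_zero]
  -- every v j lies in the K-span of b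
  have hKspan : ∀ j, v j ∈ Submodule.span ↥K b := by
    intro j
    -- coefficients over L
    have hvj : v j ∈ Submodule.span L (Set.range ((↑) : b → U)) := by
      rw [Subtype.range_coe]
      rw [hbspan]
      exact Submodule.subset_span ⟨j, rfl⟩
    obtain ⟨a, ha⟩ := (Finsupp.mem_span_range_iff_exists_finsupp).1 hvj
    -- replace finsupp by function
    set a' : b → L := fun x => a x with ha'
    have hsum : ∑ x : b, a' x • (x : U) = v j := by
      rw [← ha]
      rw [Finsupp.sum_fintype]
      intro x; simp
    -- the K-side solution
    set bk : b → K := fun x => ⟨B (x : U) (v j), by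
      obtain ⟨i, hi⟩ := hbsub x.2
      rw [← hi]
      exact hmem i j⟩ with hbk
    set c : b → K := Gk⁻¹.mulVec bk with hc
    have hGkc : Gk.mulVec c = bk := by
      rw [hc, Matrix.mulVec_mulVec, Matrix.mul_nonsing_inv _ (isUnit_iff_ne_zero.2 hdetGk), Matrix.one_mulVec]
    -- both a' and coe ∘ c solve the same system over L
    have hGa : G.mulVec a' = fun x : b => B (x : U) (v j) := by
      funext x
      simp only [Matrix.mulVec, dotProduct]
      rw [← hsum, map_sum]
      congr 1
      funext y
      rw [hGapp]
      simp [mul_comm]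
    have hGc : G.mulVec (fun x => (c x : L)) = fun x : b => B (x : U) (v j) := by
      funext x
      have := congrArg K.subtype (congrFun hGkc x)
      rw [RingHom.map_mulVec] at this
      simpa [hGdef, hbk, Function.comp_def] using this
    have hac : a' = fun x => (c x : L) := by
      by_contra hne'
      apply hdetG
      rw [← Matrix.exists_mulVec_eq_zero_iff]
      refine ⟨a' - (fun x => (c x : L)), sub_ne_zero.2 hne', ?_⟩
      rw [Matrix.mulVec_sub, hGa, hGc, sub_self]
    -- conclude
    rw [← hsum]
    refine Submodule.sum_mem _ fun x _ => ?_
    rw [hac]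
    have : ((c x : L)) • (x : U) = (c x) • (x : U) := rfl
    rw [this]
    exact Submodule.smul_mem _ _ (Submodule.subset_span x.2)
  -- K-span of range v equals K-span of b
  have hspanK : Submodule.span ↥K (Set.range v) = Submodule.span ↥K b := by
    apply le_antisymm
    · rw [Submodule.span_le]
      rintro _ ⟨j, rfl⟩
      exact hKspan j
    · exact Submodule.span_mono hbsub
  -- b is K-independent
  have hbindepK : LinearIndependent ↥K ((↑) : b → U) := by
    refine hbindep.restrict_scalars ?_
    intro x y hxy
    simpa [Subfield.smul_def] using hxy
  rw [hspanK, ← hbspan]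
  rw [finrank_span_set_eq_card hbindepK, finrank_span_set_eq_card hbindep]
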